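/- Fix A > 0 and let g : ℝ → ℝ be continuously differentiable with bounded derivative. Let U be a random variable uniformly distributed on [−A, A] and let V be a random variable with probability density f_A(x) := C(A)^{-1} (e^A − e^x)(e^A − e^{−x}) on [−A, A], where C(A) := ∫_{−A}^{A} (e^A − e^x)(e^A − e^{−x}) dx. Then E[(e^{−U} − e^{U}) g(U)] = − e^{−A} (C(A)/(2A)) E[g'(V)]. -/

import Mathlib

open Real MeasureTheory ProbabilityTheory

/-- The normalizing constant `C(A) = ∫_{-A}^{A} (e^A - e^x)(e^A - e^{-x}) dx`. -/
noncomputable def Cconst (A : ℝ) : ℝ :=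
  ∫ x in (-A)..A, (exp A - exp x) * (exp A - exp (-x))

/-- The uniform distribution on `[-A, A]`. -/
noncomputable def unifLaw (A : ℝ) : Measure ℝ :=
  (ENNReal.ofReal (2 * A))⁻¹ • volume.restrict (Set.Icc (-A) A)

/-- The distribution on `[-A, A]` with density `f_A(x) = C(A)⁻¹ (e^A - e^x)(e^A - e^{-x})`. -/
noncomputable def densLaw (A : ℝ) : Measure ℝ :=
  (volume.restrict (Set.Icc (-A) A)).withDensity
    fun x => ENNReal.ofReal ((Cconst A)⁻¹ * ((exp A - exp x) * (exp A - exp (-x))))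

/-- If `g` is continuously differentiable with bounded derivative, `U` is uniform on `[-A, A]`
and `V` has density `f_A` on `[-A, A]`, then
`E[(e^{-U} - e^{U}) g(U)] = -e^{-A} (C(A)/(2A)) E[g'(V)]`. -/
theorem stmt_6 (A : ℝ) (hA : 0 < A) (g : ℝ → ℝ) (hg : ContDiff ℝ 1 g)
    (M : ℝ) (hgM : ∀ x : ℝ, |deriv g x| ≤ M)
    (Ω : Type*) [MeasureSpace Ω] [IsProbabilityMeasure (ℙ : Measure Ω)]
    (U V : Ω → ℝ) (hU : Measurable U) (hV : Measurable V)
    (hUlaw : Measure.map U ℙ = unifLaw A)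
    (hVlaw : Measure.map V ℙ = densLaw A) :
    ∫ ω, (exp (-(U ω)) - exp (U ω)) * g (U ω) =
      -exp (-A) * (Cconst A / (2 * A)) * ∫ ω, deriv g (V ω) := by
  have hA2 : (0:ℝ) < 2 * A := by linarith
  set F : ℝ → ℝ := fun x => (exp A - exp x) * (exp A - exp (-x)) with hFdef
  have hcF : Continuous F := by fun_prop
  have hgc : Continuous g := hg.continuous
  have hg' : Continuous (deriv g) := hg.continuous_deriv le_rfl
  have hFnonneg : ∀ x ∈ Set.Icc (-A) A, 0 ≤ F x := by
    intro x hx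
    have h1 : exp x ≤ exp A := exp_le_exp.2 hx.2
    have h2 : exp (-x) ≤ exp A := exp_le_exp.2 (by linarith [hx.1])
    exact mul_nonneg (by linarith) (by linarith)
  have hC : 0 < Cconst A := by
    apply intervalIntegral.intervalIntegral_pos_of_pos_on
    · exact hcF.intervalIntegrable _ _
    · intro x hx
      have h1 : exp x < exp A := exp_lt_exp.2 hx.2
      have h2 : exp (-x) < exp A := exp_lt_exp.2 (by linarith [hx.1])
      exact mul_pos (by linarith) (by linarith)
    · linarith
  -- LHS
  have hL : (∫ ω, (exp (-(U ω)) - exp (U ω)) * g (U ω)) =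
      (2*A)⁻¹ * ∫ x in (-A)..A, (exp (-x) - exp x) * g x := by
    have h1 : (∫ ω, (exp (-(U ω)) - exp (U ω)) * g (U ω)) =
        ∫ x, (exp (-x) - exp x) * g x ∂(Measure.map U ℙ) := by
      rw [integral_map hU.aemeasurable]
      exact Continuous.aestronglyMeasurable (by fun_prop)
    rw [h1, hUlaw, unifLaw, integral_smul_measure]
    rw [ENNReal.toReal_inv, ENNReal.toReal_ofReal hA2.le]
    rw [intervalIntegral.integral_of_le (by linarith : -A ≤ A),
        ← MeasureTheory.integral_Icc_eq_integral_Ioc]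
    simp [smul_eq_mul]
  -- E[g'(V)]
  have hR : (∫ ω, deriv g (V ω)) =
      (Cconst A)⁻¹ * ∫ x in (-A)..A, F x * deriv g x := by
    have h1 : (∫ ω, deriv g (V ω)) = ∫ x, deriv g x ∂(densLaw A) := by
      rw [← hVlaw, integral_map hV.aemeasurable hg'.aestronglyMeasurable]
    have hfe : (fun x => ENNReal.ofReal ((Cconst A)⁻¹ * ((exp A - exp x) * (exp A - exp (-x)))))
        = fun x => ((((Cconst A)⁻¹ * ((exp A - exp x) * (exp A - exp (-x)))).toNNReal : NNReal) : ENNReal) := rfl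
    have hm : Measurable fun x => ((Cconst A)⁻¹ * ((exp A - exp x) * (exp A - exp (-x)))).toNNReal :=
      (by fun_prop : Measurable fun x : ℝ => (Cconst A)⁻¹ * ((exp A - exp x) * (exp A - exp (-x)))).real_toNNReal
    rw [h1, densLaw, hfe, integral_withDensity_eq_integral_smul hm]
    rw [intervalIntegral.integral_of_le (by linarith : -A ≤ A),
        ← MeasureTheory.integral_Icc_eq_integral_Ioc, ← MeasureTheory.integral_const_mul]
    apply setIntegral_congr_fun measurableSet_Icc
    intro x hx
    have h0 : (0:ℝ) ≤ (Cconst A)⁻¹ * F x :=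
      mul_nonneg (inv_nonneg.2 hC.le) (hFnonneg x hx)
    simp only [NNReal.smul_def, smul_eq_mul, Real.coe_toNNReal _ (show (0:ℝ) ≤ (Cconst A)⁻¹ * ((exp A - exp x) * (exp A - exp (-x))) from h0)]
    ring
  -- integration by parts
  have hibp : (∫ x in (-A)..A, F x * deriv g x) =
      -exp A * ∫ x in (-A)..A, (exp (-x) - exp x) * g x := by
    have hu : ∀ x ∈ Set.uIcc (-A) A, HasDerivAt F (exp A * (exp (-x) - exp x)) x := by
      intro x _
      have h1 : HasDerivAt (fun y => exp A - exp y) (0 - exp x) x :=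
        (hasDerivAt_const x (exp A)).sub (Real.hasDerivAt_exp x)
      have h2 : HasDerivAt (fun y => exp A - exp (-y)) (0 - exp (-x) * (-1)) x := by
        apply (hasDerivAt_const x (exp A)).sub
        exact (Real.hasDerivAt_exp (-x)).comp x ((hasDerivAt_id x).neg)
      have := h1.fun_mul h2
      exact this.congr_deriv (by ring)
    have hv : ∀ x ∈ Set.uIcc (-A) A, HasDerivAt g (deriv g x) x :=
      fun x _ => (hg.differentiable one_ne_zero x).hasDerivAt
    have key := intervalIntegral.integral_mul_deriv_eq_deriv_mul hu hv
      ((by fun_prop : Continuous fun x => exp A * (exp (-x) - exp x)).intervalIntegrable _ _)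
      (hg'.intervalIntegrable _ _)
    have hFA : F A = 0 := by simp [hFdef]
    have hFnA : F (-A) = 0 := by simp [hFdef]
    rw [key, hFA, hFnA]
    rw [show (fun x => exp A * (exp (-x) - exp x) * g x)
        = fun x => exp A * ((exp (-x) - exp x) * g x) by funext x; ring]
    rw [intervalIntegral.integral_const_mul]
    ring
  rw [hL, hR, hibp]
  have hexp : exp (-A) * exp A = 1 := by
    rw [← Real.exp_add]; simp
  set I := ∫ x in (-A)..A, (exp (-x) - exp x) * g x with hI
  have : -exp (-A) * (Cconst A / (2 * A)) * ((Cconst A)⁻¹ * (-exp A * I))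
      = (exp (-A) * exp A) * (Cconst A * (Cconst A)⁻¹) * ((2 * A)⁻¹ * I) := by
    ring
  rw [this, hexp, mul_inv_cancel₀ hC.ne', one_mul, one_mul]
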